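/- Let 𝐂 be a locally cartesian closed category with finite products and X an object of 𝐂. Let p : A → B be orthogonal to X, let f : B → C be an arbitrary morphism, and let Π_f : 𝐂/B → 𝐂/C be the right adjoint of the pullback functor f* : 𝐂/C → 𝐂/B. Then the morphism Π_f(p) (the structure morphism of the image under Π_f of p regarded as an object of 𝐂/B) is orthogonal to X. -/

import Mathlib

open CategoryTheory CategoryTheory.Limits MonoidalCategory

universe v u

/-- In a category with (chosen) finite products, a morphism `p : A ⟶ B` is
*orthogonal* to an object `X` if every commuting square whose left edge is a
projection `Y ⊗ X ⟶ Y` and whose right edge is `p` has a unique diagonal filler. -/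
def OrthogonalTo {𝒞 : Type u} [Category.{v} 𝒞] [CartesianMonoidalCategory 𝒞]
    {A B : 𝒞} (p : A ⟶ B) (X : 𝒞) : Prop :=
  ∀ (Y : 𝒞) (f : Y ⊗ X ⟶ A) (g : Y ⟶ B),
    f ≫ p = CartesianMonoidalCategory.fst Y X ≫ g →
      ∃! h : Y ⟶ A, CartesianMonoidalCategory.fst Y X ≫ h = f ∧ h ≫ p = g

/-- In a locally cartesian closed category with finite products, if `p : A ⟶ B` is
orthogonal to `X` and `f : B ⟶ C`, then the dependent product `Π_f(p)`, i.e. the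
structure morphism of the image of `p` under the right adjoint `Π_f` of the pullback
functor `f*`, is orthogonal to `X`. -/
theorem statement_13 {𝒞 : Type u} [Category.{v} 𝒞] [CartesianMonoidalCategory 𝒞]
    [HasPullbacks 𝒞]
    (lcc : ∀ {Y Z : 𝒞} (g : Y ⟶ Z), (Over.pullback g).IsLeftAdjoint)
    {A B C : 𝒞} (p : A ⟶ B) (f : B ⟶ C)
    (Pi : Over B ⥤ Over C) (adj : Over.pullback f ⊣ Pi)
    (X : 𝒞) (hp : OrthogonalTo p X) :
    OrthogonalTo (Pi.obj (Over.mk p)).hom X := by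
  intro Y u g hu
  open CartesianMonoidalCategory in
  -- abbreviations
  let G : Over C := Over.mk g
  let G' : Over C := Over.mk (CartesianMonoidalCategory.fst Y X ≫ g)
  let m : G' ⟶ G := Over.homMk (CartesianMonoidalCategory.fst Y X) rfl
  let P : 𝒞 := Limits.pullback g f
  let π₁ : P ⟶ Y := pullback.fst g f
  let π₂ : P ⟶ B := pullback.snd g f
  let Q : 𝒞 := Limits.pullback (CartesianMonoidalCategory.fst Y X ≫ g) f
  -- the comparison isomorphism Q ≅ P ⊗ X
  let ψ : P ⊗ X ⟶ Q := pullback.lift (π₁ ▷ X) (CartesianMonoidalCategory.fst P X ≫ π₂) (by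
    rw [← Category.assoc, CartesianMonoidalCategory.whiskerRight_fst, Category.assoc,
      Category.assoc, pullback.condition])
  let φ' : Q ⟶ P := pullback.lift
      (pullback.fst (CartesianMonoidalCategory.fst Y X ≫ g) f ≫ CartesianMonoidalCategory.fst Y X)
      (pullback.snd (CartesianMonoidalCategory.fst Y X ≫ g) f)
      (by rw [Category.assoc, ← pullback.condition])
  let φ : Q ⟶ P ⊗ X := CartesianMonoidalCategory.lift φ'
      (pullback.fst (CartesianMonoidalCategory.fst Y X ≫ g) f ≫ CartesianMonoidalCategory.snd Y X)
  have hψφ' : ψ ≫ φ' = CartesianMonoidalCategory.fst P X := by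
    apply pullback.hom_ext
    · simp [ψ, φ', π₁, CartesianMonoidalCategory.whiskerRight_fst, pullback.lift_fst, pullback.lift_snd, pullback.lift_fst_assoc, pullback.lift_snd_assoc]
    · simp [ψ, φ', π₂, pullback.lift_fst, pullback.lift_snd, pullback.lift_fst_assoc, pullback.lift_snd_assoc]
  have hφψ : φ ≫ ψ = 𝟙 Q := by
    apply pullback.hom_ext
    · apply CartesianMonoidalCategory.hom_ext
      · simp [φ, φ', ψ, π₁, CartesianMonoidalCategory.whiskerRight_fst, pullback.lift_fst, pullback.lift_snd, pullback.lift_fst_assoc, pullback.lift_snd_assoc]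
      · simp [φ, φ', ψ, CartesianMonoidalCategory.whiskerRight_snd, pullback.lift_fst, pullback.lift_snd, pullback.lift_fst_assoc, pullback.lift_snd_assoc]
    · simp [φ, φ', ψ, π₂, pullback.lift_fst, pullback.lift_snd, pullback.lift_fst_assoc, pullback.lift_snd_assoc]
  -- the map `(Over.pullback f).map m` has left component `φ'`
  have hmapm : ((Over.pullback f).map m).left = φ' := by
    apply pullback.hom_ext <;> simp [φ', m, G, G']
  -- transport `u` through the adjunction
  let ut : G' ⟶ Pi.obj (Over.mk p) := Over.homMk u (by simpa [G'] using hu)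
  let k' : Q ⟶ A := ((adj.homEquiv G' (Over.mk p)).symm ut).left
  have hk' : k' ≫ p = pullback.snd (CartesianMonoidalCategory.fst Y X ≫ g) f := by
    simpa [G'] using Over.w ((adj.homEquiv G' (Over.mk p)).symm ut)
  -- apply orthogonality of `p`
  have hsq : (ψ ≫ k') ≫ p = CartesianMonoidalCategory.fst P X ≫ π₂ := by
    rw [Category.assoc, hk']
    simp [ψ, pullback.lift_snd]
  obtain ⟨k, ⟨hk1, hk2⟩, hkuniq⟩ := hp P (ψ ≫ k') π₂ hsq
  -- the candidate filler
  let kt : (Over.pullback f).obj G ⟶ Over.mk p := Over.homMk k (by simpa [G] using hk2)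
  refine ⟨(adj.homEquiv G (Over.mk p) kt).left, ⟨?_, ?_⟩, ?_⟩
  · -- fst ≫ h = u
    have hnat : (adj.homEquiv G' (Over.mk p)) ((Over.pullback f).map m ≫ kt)
        = m ≫ adj.homEquiv G (Over.mk p) kt := adj.homEquiv_naturality_left m kt
    have key : (Over.pullback f).map m ≫ kt = (adj.homEquiv G' (Over.mk p)).symm ut := by
      ext
      show ((Over.pullback f).map m).left ≫ k = k'
      rw [hmapm]
      have : φ' ≫ k = φ ≫ (ψ ≫ k') := by
        rw [← hk1, ← Category.assoc]
        simp [φ]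
      rw [this, ← Category.assoc, hφψ, Category.id_comp]
    have := congrArg CommaMorphism.left (hnat.symm.trans (congrArg _ key))
    simp only [Equiv.apply_symm_apply] at this
    simpa [m, ut, Over.comp_left] using this
  · -- h ≫ Π_f(p) = g
    simpa [G] using Over.w (adj.homEquiv G (Over.mk p) kt)
  · -- uniqueness
    intro h' ⟨hh1, hh2⟩
    let ht : G ⟶ Pi.obj (Over.mk p) := Over.homMk h' (by simpa [G] using hh2)
    let k₀ : P ⟶ A := ((adj.homEquiv G (Over.mk p)).symm ht).left
    have hk₀p : k₀ ≫ p = π₂ := by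
      simpa [G, π₂] using Over.w ((adj.homEquiv G (Over.mk p)).symm ht)
    -- `ut = m ≫ ht`
    have hut : ut = m ≫ ht := by
      ext
      show u = CartesianMonoidalCategory.fst Y X ≫ h'
      exact hh1.symm
    have hk'eq : k' = φ' ≫ k₀ := by
      show ((adj.homEquiv G' (Over.mk p)).symm ut).left = φ' ≫ k₀
      rw [hut, adj.homEquiv_naturality_left_symm]
      show (((Over.pullback f).map m) ≫ _).left = _
      rw [Over.comp_left, hmapm]
    have hfst : CartesianMonoidalCategory.fst P X ≫ k₀ = ψ ≫ k' := by
      rw [hk'eq, ← Category.assoc, hψφ']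
    have : k₀ = k := hkuniq k₀ ⟨hfst, hk₀p⟩
    have hteq : ht = adj.homEquiv G (Over.mk p) kt := by
      have : (adj.homEquiv G (Over.mk p)).symm ht = kt := by
        ext
        exact this
      rw [← this, Equiv.apply_symm_apply]
    exact congrArg CommaMorphism.left hteq
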